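/- In the Round-Robin algorithm, if the agent with the highest priority (agent 1) reports her true additive valuation, then regardless of the other agents' bids, agent 1 does not envy any other agent's bundle in the resulting allocation. -/

import Mathlib

open Finset

/-- Pick the available good with the highest bid, ties broken lexicographically
(i.e. in favor of the smaller index). -/
noncomputable def rrPick {m : ℕ} (bid : Fin m → ℝ) (S : Finset (Fin m)) : Option (Fin m) :=
  if h : S.Nonempty then
    some (S.exists_max_image (fun g => toLex (bid g, OrderDual.toDual g)) h).choose
  else none

/-- The state of Round-Robin (available goods, partial allocation) after `t` picks:
at step `t` the active agent is `t % n` and she picks her highest-bid available good. -/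
noncomputable def rrState (n : ℕ) [NeZero n] {m : ℕ} (b : Fin n → Fin m → ℝ) :
    ℕ → Finset (Fin m) × (Fin n → Finset (Fin m))
  | 0 => (Finset.univ, fun _ => ∅)
  | (t + 1) =>
    let p := rrState n b t
    let i : Fin n := ⟨t % n, Nat.mod_lt t (Nat.pos_of_ne_zero (NeZero.ne n))⟩
    match rrPick (b i) p.1 with
    | none => p
    | some g => (p.1.erase g, Function.update p.2 i (insert g (p.2 i)))

/-- the agent active at step t -/
def agentAt (n : ℕ) [NeZero n] (t : ℕ) : Fin n :=
  ⟨t % n, Nat.mod_lt t (Nat.pos_of_ne_zero (NeZero.ne n))⟩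

lemma rrPick_some_of_nonempty {m : ℕ} (bid : Fin m → ℝ) {S : Finset (Fin m)}
    (h : S.Nonempty) : ∃ g, rrPick bid S = some g := by
  simp [rrPick, h]

lemma rrPick_mem {m : ℕ} {bid : Fin m → ℝ} {S : Finset (Fin m)} {g : Fin m}
    (h : rrPick bid S = some g) : g ∈ S := by
  by_cases hS : S.Nonempty
  · simp only [rrPick, dif_pos hS, Option.some.injEq] at h
    subst h
    exact (S.exists_max_image (fun g => toLex (bid g, OrderDual.toDual g)) hS).choose_spec.1
  · simp [rrPick, hS] at h

lemma rrPick_le {m : ℕ} {bid : Fin m → ℝ} {S : Finset (Fin m)} {g : Fin m}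
    (h : rrPick bid S = some g) : ∀ g' ∈ S, bid g' ≤ bid g := by
  intro g' hg'
  by_cases hS : S.Nonempty
  · simp only [rrPick, dif_pos hS, Option.some.injEq] at h
    subst h
    have := (S.exists_max_image (fun g => toLex (bid g, OrderDual.toDual g)) hS).choose_spec.2 g' hg'
    rw [Prod.Lex.le_iff] at this
    rcases this with h | ⟨h, _⟩
    · exact le_of_lt h
    · exact le_of_eq h
  · simp [rrPick, hS] at h

lemma rrState_succ (n : ℕ) [NeZero n] {m : ℕ} (b : Fin n → Fin m → ℝ) (t : ℕ) :
    rrState n b (t + 1) =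
      match rrPick (b (agentAt n t)) (rrState n b t).1 with
      | none => rrState n b t
      | some g => ((rrState n b t).1.erase g,
          Function.update (rrState n b t).2 (agentAt n t)
            (insert g ((rrState n b t).2 (agentAt n t)))) := rfl

lemma rrState_succ_none {n : ℕ} [NeZero n] {m : ℕ} {b : Fin n → Fin m → ℝ} {t : ℕ}
    (h : rrPick (b (agentAt n t)) (rrState n b t).1 = none) :
    rrState n b (t + 1) = rrState n b t := by
  rw [rrState_succ, h]

lemma rrState_succ_some {n : ℕ} [NeZero n] {m : ℕ} {b : Fin n → Fin m → ℝ} {t : ℕ} {g : Fin m}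
    (h : rrPick (b (agentAt n t)) (rrState n b t).1 = some g) :
    rrState n b (t + 1) = ((rrState n b t).1.erase g,
      Function.update (rrState n b t).2 (agentAt n t)
        (insert g ((rrState n b t).2 (agentAt n t)))) := by
  rw [rrState_succ, h]

section
variable {n : ℕ} [NeZero n] {m : ℕ} {b : Fin n → Fin m → ℝ}

lemma avail_succ_subset (t : ℕ) : (rrState n b (t + 1)).1 ⊆ (rrState n b t).1 := by
  rcases h : rrPick (b (agentAt n t)) (rrState n b t).1 with _ | g
  · rw [rrState_succ_none h]
  · rw [rrState_succ_some h]; exact Finset.erase_subset _ _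

lemma avail_subset (t k : ℕ) : (rrState n b (t + k)).1 ⊆ (rrState n b t).1 := by
  induction k with
  | zero => exact subset_rfl
  | succ k ih => exact (avail_succ_subset (t + k)).trans ih

lemma bundle_succ_eq {t : ℕ} {i : Fin n} (hi : i ≠ agentAt n t) :
    (rrState n b (t + 1)).2 i = (rrState n b t).2 i := by
  rcases h : rrPick (b (agentAt n t)) (rrState n b t).1 with _ | g
  · rw [rrState_succ_none h]
  · rw [rrState_succ_some h]; exact Function.update_of_ne hi _ _

lemma bundle_eq_of_not_active {t k : ℕ} {i : Fin n}
    (hi : ∀ u, u < k → agentAt n (t + u) ≠ i) :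
    (rrState n b (t + k)).2 i = (rrState n b t).2 i := by
  induction k with
  | zero => rfl
  | succ k ih =>
    show (rrState n b ((t + k) + 1)).2 i = _
    rw [bundle_succ_eq (fun h => (hi k (Nat.lt_succ_self k)) h.symm)]
    exact ih fun u hu => hi u (hu.trans (Nat.lt_succ_self k))

lemma not_mem_avail {t : ℕ} {i : Fin n} {g : Fin m}
    (hg : g ∈ (rrState n b t).2 i) : g ∉ (rrState n b t).1 := by
  induction t with
  | zero => simp [rrState] at hg
  | succ t ih =>
    rcases h : rrPick (b (agentAt n t)) (rrState n b t).1 with _ | g'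
    · rw [rrState_succ_none h] at hg ⊢; exact ih hg
    · rw [rrState_succ_some h] at hg ⊢
      dsimp only at hg
      simp only [Finset.mem_erase, not_and_or, not_not]
      by_cases hi : i = agentAt n t
      · subst hi
        rw [Function.update_self] at hg
        rcases Finset.mem_insert.mp hg with rfl | hg
        · exact Or.inl rfl
        · exact Or.inr (ih hg)
      · rw [Function.update_of_ne hi] at hg
        exact Or.inr (ih hg)

lemma rrState_const_of_empty {t : ℕ} (h : (rrState n b t).1 = ∅) (k : ℕ) :
    rrState n b (t + k) = rrState n b t := by
  induction k with
  | zero => rfl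
  | succ k ih =>
    have h2 : (rrState n b (t + k)).1 = ∅ := by rw [ih]; exact h
    have : rrPick (b (agentAt n (t + k))) (rrState n b (t + k)).1 = none := by
      simp [rrPick, h2]
    show rrState n b ((t + k) + 1) = _
    rw [rrState_succ_none this, ih]

lemma avail_card_le (t : ℕ) : (rrState n b t).1.card ≤ m - t := by
  induction t with
  | zero => simp [rrState]
  | succ t ih =>
    rcases h : rrPick (b (agentAt n t)) (rrState n b t).1 with _ | g
    · have : (rrState n b t).1 = ∅ := by
        by_contra hne
        rcases rrPick_some_of_nonempty (b (agentAt n t)) (Finset.nonempty_iff_ne_empty.mpr hne) with ⟨g, hg⟩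
        rw [h] at hg; cases hg
      rw [rrState_succ_none h, this]; simp
    · rw [rrState_succ_some h]
      have hmem := rrPick_mem h
      have := Finset.card_erase_of_mem hmem
      simp only [this]
      omega

lemma avail_empty_of_le {t : ℕ} (h : m ≤ t) : (rrState n b t).1 = ∅ := by
  have h1 := avail_card_le (b := b) t
  rw [Nat.sub_eq_zero_of_le h] at h1
  exact Finset.card_eq_zero.mp (Nat.le_zero.mp h1)

end

section
variable {n : ℕ} [NeZero n] {m : ℕ} {b : Fin n → Fin m → ℝ}

lemma agentAt_round {r k : ℕ} (hk : k < n) :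
    agentAt n (r * n + k) = ⟨k, hk⟩ := by
  apply Fin.ext
  show (r * n + k) % n = k
  rw [Nat.mul_comm r n, Nat.mul_add_mod, Nat.mod_eq_of_lt hk]

lemma agentAt_round_zero (r : ℕ) : agentAt n (r * n) = 0 := by
  apply Fin.ext
  simp [agentAt, Nat.mul_mod_left]

lemma round_step {v₁ : Fin m → ℝ} (hv₁ : ∀ g, 0 ≤ v₁ g) (htruth : b 0 = v₁) (r : ℕ)
    (hP : ∀ j, ∑ g ∈ (rrState n b (r * n)).2 j, v₁ g ≤ ∑ g ∈ (rrState n b (r * n)).2 0, v₁ g) :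
    ∀ j, ∑ g ∈ (rrState n b ((r + 1) * n)).2 j, v₁ g ≤
      ∑ g ∈ (rrState n b ((r + 1) * n)).2 0, v₁ g := by
  set t := r * n with ht
  have hnpos : 0 < n := Nat.pos_of_ne_zero (NeZero.ne n)
  have htn : (r + 1) * n = t + n := by rw [ht]; ring
  rw [htn]
  by_cases hS : (rrState n b t).1.Nonempty
  · -- agent 0 picks g₀ at time t
    obtain ⟨g₀, hpick⟩ := rrPick_some_of_nonempty (b (agentAt n t)) hS
    have hg₀mem : g₀ ∈ (rrState n b t).1 := rrPick_mem hpick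
    have hg₀max : ∀ g' ∈ (rrState n b t).1, v₁ g' ≤ v₁ g₀ := by
      have := rrPick_le hpick
      rwa [agentAt_round_zero, htruth] at this
    have hg₀notmem : ∀ i : Fin n, g₀ ∉ (rrState n b t).2 i := by
      intro i hmem
      exact not_mem_avail hmem hg₀mem
    have key : ∀ k, k ≤ n →
        (1 ≤ k → (rrState n b (t + k)).2 0 = insert g₀ ((rrState n b t).2 0)) ∧
        (∀ j : Fin n, k ≤ j.val → (rrState n b (t + k)).2 j = (rrState n b t).2 j) ∧
        (∀ j, ∑ g ∈ (rrState n b (t + k)).2 j, v₁ g ≤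
          ∑ g ∈ (rrState n b (t + k)).2 0, v₁ g) := by
      intro k
      induction k with
      | zero => exact fun _ => ⟨fun h => absurd h (by omega), fun _ _ => rfl, hP⟩
      | succ k ih =>
        intro hk1
        obtain ⟨ih1, ih2, ih3⟩ := ih (by omega)
        have hkn : k < n := hk1
        have hagent : agentAt n (t + k) = ⟨k, hkn⟩ := agentAt_round hkn
        rcases Nat.eq_zero_or_pos k with rfl | hkpos
        · -- step at time t: agent 0 picks g₀
          have hag0 : agentAt n (t + 0) = 0 := by rw [Nat.add_zero]; exact agentAt_round_zero r
          have hstep : rrState n b (t + 1) = ((rrState n b t).1.erase g₀,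
              Function.update (rrState n b t).2 (agentAt n t)
                (insert g₀ ((rrState n b t).2 (agentAt n t)))) := rrState_succ_some hpick
          rw [agentAt_round_zero] at hstep
          have hA0 : (rrState n b (t + 1)).2 0 = insert g₀ ((rrState n b t).2 0) := by
            rw [hstep]; dsimp only; exact Function.update_self _ _ _
          refine ⟨fun _ => hA0, ?_, ?_⟩
          · intro j hj
            have hj0 : j ≠ 0 := by
              intro h; rw [h] at hj; simp at hj
            rw [hstep]; dsimp only; exact Function.update_of_ne hj0 _ _
          · intro j
            by_cases hj : j = 0
            · subst hj; exact le_refl _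
            · have hje : (rrState n b (t + 1)).2 j = (rrState n b t).2 j := by
                rw [hstep]; dsimp only; exact Function.update_of_ne hj _ _
              rw [hje, hA0, Finset.sum_insert (hg₀notmem 0)]
              have := hP j
              have h0 := hv₁ g₀
              linarith
        · -- step at time t + k, agent k ≠ 0
          have hne0 : (⟨k, hkn⟩ : Fin n) ≠ 0 := by
            intro h
            have := Fin.mk.injEq k hkn 0 (by omega) ▸ h
            simp [Fin.ext_iff] at h
            omega
          rcases hpk : rrPick (b (agentAt n (t + k))) (rrState n b (t + k)).1 with _ | gk
          · have hstep : rrState n b (t + (k + 1)) = rrState n b (t + k) := by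
              show rrState n b ((t + k) + 1) = _
              exact rrState_succ_none hpk
            rw [hstep]
            exact ⟨fun _ => ih1 hkpos, fun j hj => ih2 j (by omega), ih3⟩
          · have hstep : rrState n b (t + (k + 1)) = ((rrState n b (t + k)).1.erase gk,
                Function.update (rrState n b (t + k)).2 (agentAt n (t + k))
                  (insert gk ((rrState n b (t + k)).2 (agentAt n (t + k))))) := by
              show rrState n b ((t + k) + 1) = _
              exact rrState_succ_some hpk
            rw [hagent] at hstep
            have hA0 : (rrState n b (t + (k + 1))).2 0 = insert g₀ ((rrState n b t).2 0) := by
              rw [hstep]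
              dsimp only
              rw [Function.update_of_ne (Ne.symm hne0)]
              exact ih1 hkpos
            refine ⟨fun _ => hA0, ?_, ?_⟩
            · intro j hj
              have hjne : j ≠ ⟨k, hkn⟩ := by
                intro h; rw [h] at hj; simp at hj
              rw [hstep]
              dsimp only
              rw [Function.update_of_ne hjne]
              exact ih2 j (by omega)
            · intro j
              rw [hA0, Finset.sum_insert (hg₀notmem 0)]
              by_cases hj : j = ⟨k, hkn⟩
              · subst hj
                have hAj : (rrState n b (t + (k + 1))).2 ⟨k, hkn⟩ =
                    insert gk ((rrState n b t).2 ⟨k, hkn⟩) := by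
                  rw [hstep]
                  dsimp only
                  rw [Function.update_self, ih2 ⟨k, hkn⟩ (le_refl k)]
                have hgkS : gk ∈ (rrState n b t).1 :=
                  avail_subset t k (rrPick_mem hpk)
                have hgknot : gk ∉ (rrState n b t).2 ⟨k, hkn⟩ :=
                  fun hmem => not_mem_avail hmem hgkS
                rw [hAj, Finset.sum_insert hgknot]
                have h1 : v₁ gk ≤ v₁ g₀ := hg₀max gk hgkS
                have h2 := hP ⟨k, hkn⟩
                linarith
              · have hje : (rrState n b (t + (k + 1))).2 j = (rrState n b (t + k)).2 j := by
                  rw [hstep]; dsimp only; exact Function.update_of_ne hj _ _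
                rw [hje]
                have := ih3 j
                rcases Nat.eq_zero_or_pos k with h | _
                · omega
                have hA0k : (rrState n b (t + k)).2 0 = insert g₀ ((rrState n b t).2 0) :=
                  ih1 hkpos
                rw [hA0k, Finset.sum_insert (hg₀notmem 0)] at this
                exact this
    obtain ⟨_, _, h3⟩ := key n (le_refl n)
    exact h3
  · have hempty : (rrState n b t).1 = ∅ := Finset.not_nonempty_iff_eq_empty.mp hS
    rw [rrState_const_of_empty hempty n]
    exact hP

end

/-- The allocation output by the Round-Robin mechanism on bid profile `b`. -/
noncomputable def roundRobin (n : ℕ) [NeZero n] {m : ℕ} (b : Fin n → Fin m → ℝ) :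
    Fin n → Finset (Fin m) :=
  (rrState n b m).2

/-- if the first agent bids truthfully in Round-Robin, then regardless of the
other agents' bids she does not envy any other agent's bundle. -/
theorem roundRobin_truthful_first_agent_no_envy {n m : ℕ} [NeZero n]
    (v₁ : Fin m → ℝ) (hv₁ : ∀ g, 0 ≤ v₁ g)
    (b : Fin n → Fin m → ℝ) (htruth : b 0 = v₁) :
    ∀ j : Fin n, ∑ g ∈ roundRobin n b j, v₁ g ≤ ∑ g ∈ roundRobin n b 0, v₁ g := by
  have P : ∀ r : ℕ, ∀ j : Fin n,
      ∑ g ∈ (rrState n b (r * n)).2 j, v₁ g ≤ ∑ g ∈ (rrState n b (r * n)).2 0, v₁ g := by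
    intro r
    induction r with
    | zero => intro j; simp [rrState]
    | succ r ih => exact round_step hv₁ htruth r ih
  have hm : rrState n b (m * n) = rrState n b m := by
    have h1 : (rrState n b m).1 = ∅ := avail_empty_of_le le_rfl
    have h2 := rrState_const_of_empty h1 (m * n - m)
    rwa [Nat.add_sub_cancel'
      (Nat.le_mul_of_pos_right m (Nat.pos_of_ne_zero (NeZero.ne n)))] at h2
  intro j
  have := P m j
  rw [hm] at this
  simpa [roundRobin] using this
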